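/- Let $(a_1,\dots,a_m)$ be a telescopic sequence with gap set $W=\mathbb{Z}_{\ge0}\setminus(a_1\mathbb{Z}_{\ge0}+\cdots+a_m\mathbb{Z}_{\ge0})$. Then the number of gaps equals $g=\frac{1}{2}\big(1-a_1+\sum_{i=2}^m(d_{i-1}/d_i-1)a_i\big)$, where $d_i=\gcd(a_1,\dots,a_i)$. -/

import Mathlib

/-- `dseq a i = gcd(a 1, …, a i)`. -/
def dseq (a : ℕ → ℕ) (i : ℕ) : ℕ := Finset.gcd (Finset.Icc 1 i) a

/-- membership in the numerical semigroup generated by `a 1, …, a m`. -/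
def InSemigroup (m : ℕ) (a : ℕ → ℕ) (x : ℕ) : Prop :=
  ∃ c : ℕ → ℕ, x = ∑ i ∈ Finset.Icc 1 m, c i * a i

/-- `(a 1, …, a m)` is a telescopic sequence. -/
def Telescopic (m : ℕ) (a : ℕ → ℕ) : Prop :=
  2 ≤ m ∧ (∀ i, 1 ≤ i → i ≤ m → 0 < a i) ∧ dseq a m = 1 ∧
  ∀ i, 2 ≤ i → i ≤ m → ∃ c : ℕ → ℕ,
    a i / dseq a i = ∑ j ∈ Finset.Icc 1 (i - 1), c j * (a j / dseq a (i - 1))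

/-- membership in the restricted exponent set `B(A_m)`. -/
def InB (m : ℕ) (a : ℕ → ℕ) (k : ℕ → ℕ) : Prop :=
  (∀ j, (j = 0 ∨ m < j) → k j = 0) ∧
  ∀ i, 2 ≤ i → i ≤ m → k i ≤ dseq a (i - 1) / dseq a i - 1



lemma tel_div_pair {p q a b : ℕ} (hp : 0 < p) (hab : a + b = p * q) (ha : ¬ p ∣ a) :
    a / p + b / p = q - 1 := by
  have h1 := Nat.div_add_mod a p
  have h2 := Nat.div_add_mod b p
  have hr : 0 < a % p := Nat.pos_of_ne_zero (fun h => ha (Nat.dvd_of_mod_eq_zero h))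
  have hr2 : a % p < p := Nat.mod_lt _ hp
  have hs2 : b % p < p := Nat.mod_lt _ hp
  have hdvd : p ∣ a % p + b % p := by
    have : a % p + b % p = p * q - p * (a / p) - p * (b / p) := by omega
    rw [this]
    exact Nat.dvd_sub (Nat.dvd_sub ⟨q, rfl⟩ ⟨a / p, rfl⟩) ⟨b / p, rfl⟩
  have hsum : a % p + b % p = p := by
    obtain ⟨k, hk⟩ := hdvd
    have hk2 : k < 2 := by nlinarith
    interval_cases k <;> omega
  have hmul : p * (a / p + b / p + 1) = p * q := by
    have hexp : p * (a / p + b / p + 1) = p * (a / p) + p * (b / p) + p := by ring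
    omega
  exact Nat.eq_sub_of_add_eq (Nat.eq_of_mul_eq_mul_left hp hmul)

lemma tel_sum_floor (p q : ℕ) (hp : 0 < p) (h : Nat.Coprime p q) :
    2 * ∑ t ∈ Finset.range p, q * t / p = (p - 1) * (q - 1) := by
  have key : ∀ t ∈ Finset.Ico 1 p, q * t / p + q * (p - t) / p = q - 1 := by
    intro t ht
    simp only [Finset.mem_Ico] at ht
    apply tel_div_pair hp
    · have : q * t + q * (p - t) = q * p := by
        rw [← Nat.mul_add]; congr 1; omega
      rw [this]; ring
    · intro hdvd
      have : p ∣ t := (Nat.Coprime.dvd_of_dvd_mul_left h hdvd)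
      have := Nat.le_of_dvd (by omega) this
      omega
  have hrefl : ∑ t ∈ Finset.Ico 1 p, q * t / p = ∑ t ∈ Finset.Ico 1 p, q * (p - t) / p := by
    apply Finset.sum_nbij' (fun t => p - t) (fun t => p - t)
    · intro t ht; simp only [Finset.mem_Ico] at *; omega
    · intro t ht; simp only [Finset.mem_Ico] at *; omega
    · intro t ht; simp only [Finset.mem_Ico] at *; omega
    · intro t ht; simp only [Finset.mem_Ico] at *; omega
    · intro t ht; simp only [Finset.mem_Ico] at ht
      congr 2; omega
  have hrange : ∑ t ∈ Finset.range p, q * t / p = ∑ t ∈ Finset.Ico 1 p, q * t / p := by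
    rw [Finset.range_eq_Ico, ← Finset.sum_Ico_consecutive _ (Nat.zero_le 1) hp]
    simp
  rw [hrange, two_mul]
  nth_rewrite 2 [hrefl]
  rw [← Finset.sum_add_distrib, Finset.sum_congr rfl key, Finset.sum_const,
    Nat.card_Ico, smul_eq_mul]



lemma dseq_one (a : ℕ → ℕ) : dseq a 1 = a 1 := by
  simp [dseq]

lemma dseq_succ (a : ℕ → ℕ) (i : ℕ) (hi : 1 ≤ i) :
    dseq a (i + 1) = Nat.gcd (a (i + 1)) (dseq a i) := by
  unfold dseq
  rw [show Finset.Icc 1 (i+1) = insert (i+1) (Finset.Icc 1 i) by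
    ext x; simp [Finset.mem_Icc, Finset.mem_insert]; omega]
  rw [Finset.gcd_insert]
  rfl

lemma dseq_dvd (a : ℕ → ℕ) (i j : ℕ) (h1 : 1 ≤ j) (h2 : j ≤ i) : dseq a i ∣ a j :=
  Finset.gcd_dvd (by simp [Finset.mem_Icc]; omega)

lemma dseq_succ_dvd (a : ℕ → ℕ) (i : ℕ) : dseq a (i + 1) ∣ dseq a i := by
  apply Finset.dvd_gcd
  intro j hj
  apply dseq_dvd
  · exact (Finset.mem_Icc.mp hj).1
  · exact le_trans (Finset.mem_Icc.mp hj).2 (by omega)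

lemma dseq_pos (a : ℕ → ℕ) (i : ℕ) (hi : 1 ≤ i) (ha : 0 < a 1) : 0 < dseq a i := by
  rcases Nat.eq_zero_or_pos (dseq a i) with h | h
  · exfalso
    rw [dseq, Finset.gcd_eq_zero_iff] at h
    have := h 1 (by simp [Finset.mem_Icc]; omega)
    omega
  · exact h

-- x / b = x / c * (c / b) when b ∣ c ∣ x
lemma div_eq_div_mul {b c x : ℕ} (hb : 0 < b) (hc : 0 < c) (h1 : b ∣ c) (h2 : c ∣ x) :
    x / b = x / c * (c / b) := by
  obtain ⟨e, rfl⟩ := h1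
  obtain ⟨f, rfl⟩ := h2
  have he : 0 < e := Nat.pos_of_ne_zero (by rintro rfl; simp at hc)
  rw [Nat.mul_div_cancel_left _ (by positivity : 0 < b * e),
      Nat.mul_div_cancel_left _ hb, Nat.mul_assoc, Nat.mul_div_cancel_left _ hb,
      Nat.mul_comm]

lemma glue (S : Set ℕ) (hadd : ∀ x ∈ S, ∀ y ∈ S, x + y ∈ S)
    (G' : Finset ℕ) (hG' : ∀ n, n ∈ G' ↔ n ∉ S)
    (p q : ℕ) (hp : 0 < p) (hq : 0 < q) (hpq : Nat.Coprime p q) (hqS : q ∈ S)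
    (T : Set ℕ) (hT : ∀ n, n ∈ T ↔ ∃ s ∈ S, ∃ t : ℕ, n = p * s + q * t) :
    ∃ GT : Finset ℕ, (∀ n, n ∈ GT ↔ n ∉ T) ∧
      2 * GT.card = p * (2 * G'.card) + (p - 1) * (q - 1) := by
  -- multiples of q can be absorbed
  have hmulS : ∀ s ∈ S, ∀ j : ℕ, s + q * j ∈ S := by
    intro s hs j
    induction j with
    | zero => simpa using hs
    | succ j ih =>
        rw [Nat.mul_succ, ← Nat.add_assoc]
        exact hadd _ ih _ hqS
  -- canonical decomposition with t < p
  have hcanon : ∀ n, n ∈ T ↔ ∃ s ∈ S, ∃ t, t < p ∧ n = p * s + q * t := by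
    intro n
    rw [hT]
    constructor
    · rintro ⟨s, hs, t, rfl⟩
      refine ⟨s + q * (t / p), hmulS s hs _, t % p, Nat.mod_lt _ hp, ?_⟩
      have h1 : p * (s + q * (t / p)) + q * (t % p) = p * s + q * (p * (t / p) + t % p) := by
        ring
      rw [h1, Nat.div_add_mod]
    · rintro ⟨s, hs, t, _, rfl⟩
      exact ⟨s, hs, t, rfl⟩
  -- injectivity of t ↦ q*t mod p
  have tinj : ∀ t t', t < p → t' < p → q * t ≡ q * t' [MOD p] → t = t' := by
    intro t t' h h' hmod
    have h2 : t ≡ t' [MOD p] := Nat.ModEq.cancel_left_of_coprime (c := q) hpq hmod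
    unfold Nat.ModEq at h2
    rwa [Nat.mod_eq_of_lt h, Nat.mod_eq_of_lt h'] at h2
  have keymem : ∀ t, t < p → ∀ u, (p * u + q * t ∈ T ↔ u ∈ S) := by
    intro t ht u
    constructor
    · intro hmem
      obtain ⟨s, hs, t', ht', heq⟩ := (hcanon _).mp hmem
      have hmod : q * t ≡ q * t' [MOD p] := by
        calc q * t % p = (q * t + p * u) % p := (Nat.add_mul_mod_self_left _ p u).symm
          _ = (q * t' + p * s) % p := by rw [show q * t + p * u = q * t' + p * s from by omega]
          _ = q * t' % p := Nat.add_mul_mod_self_left _ p s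
      obtain rfl := tinj t t' ht ht' hmod
      have : u = s := Nat.eq_of_mul_eq_mul_left hp (by omega)
      rwa [this]
    · intro hu
      exact (hT _).mpr ⟨u, hu, t, rfl⟩
  have keyneg : ∀ t, t < p → ∀ v, 1 ≤ v → p * v ≤ q * t → (q * t - p * v) ∉ T := by
    intro t ht v hv hle hmem
    obtain ⟨s, hs, t', ht', heq⟩ := (hcanon _).mp hmem
    have hmod : q * t ≡ q * t' [MOD p] := by
      calc q * t % p = (q * t - p * v + p * v) % p := by rw [Nat.sub_add_cancel hle]
        _ = (q * t - p * v) % p := Nat.add_mul_mod_self_left _ p v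
        _ = (q * t' + p * s) % p := by rw [show q * t - p * v = q * t' + p * s from by omega]
        _ = q * t' % p := Nat.add_mul_mod_self_left _ p s
    obtain rfl := tinj t t' ht ht' hmod
    have hpv : 0 < p * v := Nat.mul_pos hp hv
    omega
  -- surjectivity: every residue class is hit
  have hsurj : ∀ n, ∃ t, t < p ∧ q * t % p = n % p := by
    have himg : (Finset.range p).image (fun t => q * t % p) = Finset.range p := by
      apply Finset.eq_of_subset_of_card_le
      · intro x hx
        simp only [Finset.mem_image, Finset.mem_range] at hx ⊢
        obtain ⟨t, _, rfl⟩ := hx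
        exact Nat.mod_lt _ hp
      · rw [Finset.card_image_of_injOn]
        intro t ht t' ht' hmod
        simp only [Finset.coe_range, Set.mem_Iio] at ht ht'
        exact tinj t t' ht ht' hmod
    intro n
    have hmem : n % p ∈ Finset.range p := Finset.mem_range.mpr (Nat.mod_lt _ hp)
    rw [← himg] at hmem
    simp only [Finset.mem_image, Finset.mem_range] at hmem
    obtain ⟨t, ht, h⟩ := hmem
    exact ⟨t, ht, h⟩
  have hdivle : ∀ v t, v < q * t / p → p * (v + 1) ≤ q * t := by
    intro v t hv
    have h := (Nat.le_div_iff_mul_le hp).mp (show v + 1 ≤ q * t / p by omega)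
    rw [Nat.mul_comm] at h
    exact h
  have hdivlt : ∀ v t, p * (v + 1) ≤ q * t → v < q * t / p := by
    intro v t h
    have h2 := (Nat.le_div_iff_mul_le hp).mpr
      (show (v + 1) * p ≤ q * t by rw [Nat.mul_comm]; exact h)
    omega
  -- the gap set of T as an explicit Finset
  refine ⟨(Finset.range p).biUnion (fun t =>
    (G'.image fun u => p * u + q * t) ∪
    ((Finset.range (q * t / p)).image fun v => q * t - p * (v + 1))), ?_, ?_⟩
  · intro n
    constructor
    · intro hn hmemT
      simp only [Finset.mem_biUnion, Finset.mem_range, Finset.mem_union,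
        Finset.mem_image] at hn
      obtain ⟨t, ht, hcase⟩ := hn
      rcases hcase with ⟨u, hu, rfl⟩ | ⟨v, hv, rfl⟩
      · exact (hG' u).mp hu ((keymem t ht u).mp hmemT)
      · have hvle : p * (v + 1) ≤ q * t := hdivle v t hv
        exact keyneg t ht (v + 1) (by omega) hvle hmemT
    · intro hn
      obtain ⟨t, ht, hmod⟩ := hsurj n
      simp only [Finset.mem_biUnion, Finset.mem_range, Finset.mem_union,
        Finset.mem_image]
      by_cases hge : q * t ≤ n
      · have hdvd : p ∣ n - q * t := (Nat.modEq_iff_dvd' hge).mp hmod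
        obtain ⟨u, hu⟩ := hdvd
        have hn_eq : n = p * u + q * t := by omega
        refine ⟨t, ht, Or.inl ⟨u, (hG' u).mpr ?_, hn_eq.symm⟩⟩
        intro huS
        exact hn (hn_eq ▸ (keymem t ht u).mpr huS)
      · push_neg at hge
        have hmod2 : n ≡ q * t [MOD p] := hmod.symm
        have hdvd : p ∣ q * t - n := (Nat.modEq_iff_dvd' (le_of_lt hge)).mp hmod2
        obtain ⟨v, hv⟩ := hdvd
        rcases v with _ | v
        · simp at hv; omega
        · have hn_eq : n = q * t - p * (v + 1) := by omega
          have hple : p * (v + 1) ≤ q * t := by omega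
          exact ⟨t, ht, Or.inr ⟨v, hdivlt v t hple, hn_eq.symm⟩⟩
  · -- cardinality computation
    have hres : ∀ t < p, ∀ n ∈ ((G'.image fun u => p * u + q * t) ∪
        ((Finset.range (q * t / p)).image fun v => q * t - p * (v + 1))),
        n % p = q * t % p := by
      intro t ht n hn
      simp only [Finset.mem_union, Finset.mem_image, Finset.mem_range] at hn
      rcases hn with ⟨u, _, rfl⟩ | ⟨v, hv, rfl⟩
      · rw [show p * u + q * t = q * t + p * u from by omega, Nat.add_mul_mod_self_left]
      · have hvle : p * (v + 1) ≤ q * t := hdivle v t hv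
        conv_rhs => rw [show q * t = (q * t - p * (v + 1)) + p * (v + 1) from by omega]
        rw [Nat.add_mul_mod_self_left]
    rw [Finset.card_biUnion]
    · have hcards : ∀ t ∈ Finset.range p,
          ((G'.image fun u => p * u + q * t) ∪
           ((Finset.range (q * t / p)).image fun v => q * t - p * (v + 1))).card
          = G'.card + q * t / p := by
        intro t ht
        rw [Finset.card_union_of_disjoint, Finset.card_image_of_injective,
            Finset.card_image_of_injOn, Finset.card_range]
        · -- injOn for B
          intro v hv w hw hvw
          simp only [Finset.coe_range, Set.mem_Iio] at hv hw
          simp only at hvw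
          have h1 : p * (v + 1) ≤ q * t := hdivle v t hv
          have h2 : p * (w + 1) ≤ q * t := hdivle w t hw
          have : p * (v + 1) = p * (w + 1) := by omega
          have := Nat.eq_of_mul_eq_mul_left hp this
          omega
        · -- injective for A
          intro u u' huu
          simp only at huu
          have : p * u = p * u' := by omega
          exact Nat.eq_of_mul_eq_mul_left hp this
        · -- disjointness of A and B
          rw [Finset.disjoint_left]
          rintro n hnA hnB
          simp only [Finset.mem_image, Finset.mem_range] at hnA hnB
          obtain ⟨u, _, rfl⟩ := hnA
          obtain ⟨v, hv, heq⟩ := hnB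
          have hvle : p * (v + 1) ≤ q * t := hdivle v t hv
          have hpv : 0 < p * (v + 1) := Nat.mul_pos hp (by omega)
          omega
      rw [Finset.sum_congr rfl hcards, Finset.sum_add_distrib, Finset.sum_const,
          Finset.card_range, smul_eq_mul, Nat.mul_add, ← Nat.mul_assoc,
          Nat.mul_comm 2 p, Nat.mul_assoc]
      congr 1
      exact tel_sum_floor p q hp hpq
    · -- pairwise disjointness of classes
      intro t ht t' ht' htne
      simp only [Function.onFun]
      rw [Finset.disjoint_left]
      intro n hn hn'
      simp only [Finset.coe_range, Set.mem_Iio] at ht ht'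
      have h1 := hres t ht n hn
      have h2 := hres t' ht' n hn'
      exact htne (tinj t t' ht ht' (by rw [Nat.ModEq, ← h1, ← h2]))

lemma tel_arith (p q : ℕ) (hp : 0 < p) (hq : 0 < q) :
    (p - 1) * (q - 1) + p = 1 + (p - 1) * q := by
  rcases p with _ | p'
  · omega
  rcases q with _ | q'
  · omega
  simp only [Nat.add_sub_cancel]
  ring

lemma tel_main (m : ℕ) (a : ℕ → ℕ) (h : Telescopic m a) :
    ∀ n, 1 ≤ n → n ≤ m → ∃ G : Finset ℕ,
      (∀ x, x ∈ G ↔ ¬ ∃ c : ℕ → ℕ, x = ∑ i ∈ Finset.Icc 1 n, c i * (a i / dseq a n)) ∧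
      2 * G.card + a 1 / dseq a n =
        1 + ∑ i ∈ Finset.Icc 2 n, (dseq a (i - 1) / dseq a i - 1) * (a i / dseq a n) := by
  obtain ⟨hm, hpos, hgcd, htel⟩ := h
  have ha1 : 0 < a 1 := hpos 1 le_rfl (by omega)
  intro n
  induction n with
  | zero => omega
  | succ n ih =>
    intro h1 hsm
    rcases Nat.eq_zero_or_pos n with rfl | hn
    · -- base case: n + 1 = 1
      refine ⟨∅, ?_, ?_⟩
      · intro x
        simp only [Finset.notMem_empty, false_iff, not_not]
        exact ⟨fun _ => x, by simp [dseq_one, Nat.div_self ha1]⟩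
      · rw [show Finset.Icc 2 1 = ∅ from rfl]
        simp [dseq_one, Nat.div_self ha1]
    · -- inductive step
      obtain ⟨G, hGmem, hGcard⟩ := ih hn (by omega)
      set d := dseq a with hd
      have hd1 : 0 < d n := dseq_pos a n hn ha1
      have hd2 : 0 < d (n + 1) := dseq_pos a (n + 1) (by omega) ha1
      have hdd : d (n + 1) ∣ d n := dseq_succ_dvd a n
      have hda : d (n + 1) ∣ a (n + 1) := dseq_dvd a (n + 1) (n + 1) (by omega) le_rfl
      set p := d n / d (n + 1) with hpdef
      set q := a (n + 1) / d (n + 1) with hqdef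
      have hp : 0 < p := Nat.div_pos (Nat.le_of_dvd hd1 hdd) hd2
      have hq : 0 < q := Nat.div_pos (Nat.le_of_dvd (hpos (n + 1) (by omega) hsm) hda) hd2
      have hpq : Nat.Coprime p q := by
        have hg : d (n + 1) = Nat.gcd (d n) (a (n + 1)) := by
          rw [hd, dseq_succ a n hn, Nat.gcd_comm]
        rw [hpdef, hqdef, hg]
        exact Nat.coprime_div_gcd_div_gcd (by rw [← hg]; exact hd2)
      set S : Set ℕ := {x | ∃ c : ℕ → ℕ, x = ∑ i ∈ Finset.Icc 1 n, c i * (a i / d n)}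
        with hS
      set T : Set ℕ :=
        {x | ∃ c : ℕ → ℕ, x = ∑ i ∈ Finset.Icc 1 (n + 1), c i * (a i / d (n + 1))} with hTdef
      have hadd : ∀ x ∈ S, ∀ y ∈ S, x + y ∈ S := by
        rintro x ⟨c, rfl⟩ y ⟨c', rfl⟩
        exact ⟨fun i => c i + c' i, by rw [← Finset.sum_add_distrib]; simp [Nat.add_mul]⟩
      have hqS : q ∈ S := by
        obtain ⟨c, hc⟩ := htel (n + 1) (by omega) hsm
        rw [Nat.add_sub_cancel] at hc
        exact ⟨c, hc⟩
      have hscale : ∀ i, 1 ≤ i → i ≤ n → a i / d (n + 1) = p * (a i / d n) := by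
        intro i hi1 hi2
        rw [hpdef, Nat.mul_comm]
        exact div_eq_div_mul hd2 hd1 hdd (dseq_dvd a n i hi1 hi2)
      have hT : ∀ x, x ∈ T ↔ ∃ s ∈ S, ∃ t : ℕ, x = p * s + q * t := by
        intro x
        constructor
        · rintro ⟨c, rfl⟩
          refine ⟨∑ i ∈ Finset.Icc 1 n, c i * (a i / d n), ⟨c, rfl⟩, c (n + 1), ?_⟩
          rw [Finset.sum_Icc_succ_top (by omega : 1 ≤ n + 1), Finset.mul_sum]
          congr 1
          · apply Finset.sum_congr rfl
            intro i hi
            simp only [Finset.mem_Icc] at hi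
            rw [hscale i hi.1 hi.2]
            ring
          · rw [Nat.mul_comm]
        · rintro ⟨s, ⟨c, rfl⟩, t, rfl⟩
          refine ⟨Function.update c (n + 1) t, ?_⟩
          rw [Finset.sum_Icc_succ_top (by omega : 1 ≤ n + 1), Function.update_self,
            Finset.mul_sum]
          congr 1
          · apply Finset.sum_congr rfl
            intro i hi
            simp only [Finset.mem_Icc] at hi
            rw [Function.update_of_ne (by omega), hscale i hi.1 hi.2]
            ring
          · rw [Nat.mul_comm]
      obtain ⟨GT, hGTmem, hGTcard⟩ := glue S hadd G (fun x => hGmem x) p q hp hq hpq hqS T hT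
      refine ⟨GT, fun x => hGTmem x, ?_⟩
      -- arithmetic
      have hsum_split : ∑ i ∈ Finset.Icc 2 (n + 1),
          (d (i - 1) / d i - 1) * (a i / d (n + 1)) =
          (∑ i ∈ Finset.Icc 2 n, (d (i - 1) / d i - 1) * (a i / d (n + 1)))
            + (d n / d (n + 1) - 1) * (a (n + 1) / d (n + 1)) := by
        rw [Finset.sum_Icc_succ_top (by omega : 2 ≤ n + 1), Nat.add_sub_cancel]
      have hsum_scale : ∑ i ∈ Finset.Icc 2 n, (d (i - 1) / d i - 1) * (a i / d (n + 1)) =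
          p * ∑ i ∈ Finset.Icc 2 n, (d (i - 1) / d i - 1) * (a i / d n) := by
        rw [Finset.mul_sum]
        apply Finset.sum_congr rfl
        intro i hi
        simp only [Finset.mem_Icc] at hi
        rw [hscale i (by omega) hi.2]
        ring
      have ha1scale : a 1 / d (n + 1) = p * (a 1 / d n) := hscale 1 le_rfl hn
      have hmul1 : p * (2 * G.card + a 1 / d n) = p * (2 * G.card) + p * (a 1 / d n) :=
        Nat.mul_add _ _ _
      have hmul2 : p * (2 * G.card + a 1 / d n) =
          p * (1 + ∑ i ∈ Finset.Icc 2 n, (d (i - 1) / d i - 1) * (a i / d n)) := by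
        rw [hGcard]
      have hmul3 : p * (1 + ∑ i ∈ Finset.Icc 2 n, (d (i - 1) / d i - 1) * (a i / d n)) =
          p + p * ∑ i ∈ Finset.Icc 2 n, (d (i - 1) / d i - 1) * (a i / d n) := by
        rw [Nat.mul_add, Nat.mul_one]
      have harith : (p - 1) * (q - 1) + p = 1 + (p - 1) * q := tel_arith p q hp hq
      rw [hsum_split, hsum_scale, ha1scale, ← hpdef, ← hqdef]
      omega

/-- Genus formula for telescopic semigroups: 2g + a₁ = 1 + Σ (d_{i-1}/d_i - 1) a_i. -/
theorem stmt2 (m : ℕ) (a : ℕ → ℕ) (h : Telescopic m a) :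
    2 * {n : ℕ | ¬ InSemigroup m a n}.ncard + a 1 =
      1 + ∑ i ∈ Finset.Icc 2 m, (dseq a (i - 1) / dseq a i - 1) * a i := by
  obtain ⟨G, hGmem, hGcard⟩ := tel_main m a h m (by have := h.1; omega) le_rfl
  have hgcd : dseq a m = 1 := h.2.2.1
  have hset : {n : ℕ | ¬ InSemigroup m a n} = ↑G := by
    ext x
    simp only [Set.mem_setOf_eq, Finset.coe_sort_coe, Finset.mem_coe, hGmem]
    unfold InSemigroup
    rw [hgcd]
    simp [Nat.div_one]
  rw [hset, Set.ncard_coe_finset]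
  rw [hgcd] at hGcard
  simp only [Nat.div_one] at hGcard
  have h2m : 2 ≤ m := h.1
  omega
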